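/- Kirchhoff's matrix-tree formula for stationary distributions: for an irreducible Markov jump process on a finite connected graph G with rates k(x,y) > 0 on edges, the stationary distribution is ρ(x) = w(x)/W, where w(x) = Σ_{T} w(T_x), the sum running over all spanning trees T of G, T_x denotes T with all edges oriented toward x, w(T_x) = Π_{(z,z') ∈ T_x} k(z,z'), and W = Σ_x w(x). That is, ρ so defined satisfies the stationary master equation Σ_y k(x,y) ρ(x) = Σ_y k(y,x) ρ(y) for all x. -/
import Mathlib


open Finset
open scoped Classical

variable {V : Type*} [Fintype V] [DecidableEq V]

/-- `p` encodes a spanning tree of `G` rooted at `r`, oriented toward the root: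
`p v` is the next vertex on the unique path from `v` to `r`. -/
def IsRootedTree (G : SimpleGraph V) (r : V) (p : V → V) : Prop :=
  p r = r ∧ (∀ v, v ≠ r → G.Adj v (p v)) ∧ ∀ v, ∃ n, p^[n] v = r

/-- Weight of an oriented (parent-map encoded) subgraph: product of the rates of its
directed edges. -/
noncomputable def wt (k : V → V → ℝ) (p : V → V) : ℝ :=
  ∏ v ∈ Finset.univ.filter (fun v => p v ≠ v), k v (p v)

/-- `w(x)`: total weight of all spanning trees of `G` rooted at (oriented toward) `x`. -/
noncomputable def treeSum (G : SimpleGraph V) (k : V → V → ℝ) (x : V) : ℝ :=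
  ∑ p ∈ Finset.univ.filter (fun p : V → V => IsRootedTree G x p), wt k p

/-- `W`: total weight of all rooted spanning trees of `G`. -/
noncomputable def W (G : SimpleGraph V) (k : V → V → ℝ) : ℝ :=
  ∑ x, treeSum G k x

/-! ### Auxiliary development -/

/-- Functional digraphs all of whose edges lie in `G` and where every vertex eventually
reaches `x`, with `x` lying on a cycle. -/
def Funct (G : SimpleGraph V) (x : V) (p : V → V) : Prop :=
  (∀ v, G.Adj v (p v)) ∧ ∀ v, ∃ n, 0 < n ∧ p^[n] v = x

lemma iterate_update_of_ne (p : V → V) (a b v : V) (n : ℕ)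
    (h : ∀ j < n, p^[j] v ≠ a) : (Function.update p a b)^[n] v = p^[n] v := by
  induction n with
  | zero => simp
  | succ n ih =>
    rw [Function.iterate_succ_apply', Function.iterate_succ_apply',
      ih (fun j hj => h j (Nat.lt_succ_of_lt hj)),
      Function.update_of_ne (h n (Nat.lt_succ_self n))]

lemma iterate_mod_of_periodic (p : V → V) (a : V) {j : ℕ} (hp : p^[j] a = a) (n : ℕ) :
    p^[n] a = p^[n % j] a := by
  conv_lhs => rw [← Nat.mod_add_div n j]
  rw [Function.iterate_add_apply, Function.iterate_mul]
  rw [Function.iterate_fixed hp (n / j)]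

lemma wt_update (G : SimpleGraph V) (k : V → V → ℝ) (p : V → V) (r b : V)
    (h1 : p r = r) (h2 : ∀ v, v ≠ r → G.Adj v (p v)) (hb : b ≠ r) :
    wt k (Function.update p r b) = k r b * wt k p := by
  have hfix : ∀ v, v ≠ r → p v ≠ v := fun v hv => (h2 v hv).ne'
  have hA : Finset.univ.filter (fun v => Function.update p r b v ≠ v) = Finset.univ := by
    ext v
    simp only [mem_filter, mem_univ, true_and, iff_true]
    by_cases hv : v = r
    · subst hv; rw [Function.update_self]; exact hb
    · rw [Function.update_of_ne hv]; exact hfix v hv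
  have hB : Finset.univ.filter (fun v => p v ≠ v) = Finset.univ.erase r := by
    ext v
    simp only [mem_filter, mem_univ, true_and, mem_erase, and_true]
    constructor
    · intro h hv; exact h (hv ▸ h1)
    · intro hv; exact hfix v hv
  rw [wt, wt, hA, hB, ← Finset.mul_prod_erase Finset.univ
    (fun v => k v (Function.update p r b v)) (mem_univ r)]
  congr 1
  · rw [Function.update_self]
  · exact Finset.prod_congr rfl fun v hv => by
      rw [Function.update_of_ne (mem_erase.mp hv).1]

/-- the predecessor of `x` on its cycle. -/
noncomputable def cpred (p : V → V) (x : V) : V :=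
  if h : ∃ n, 0 < n ∧ p^[n] x = x then p^[Nat.find h - 1] x else x

lemma cpred_spec (p : V → V) (x : V) (h : ∃ n, 0 < n ∧ p^[n] x = x) :
    p (cpred p x) = x ∧ ∃ n, p^[n] x = cpred p x := by
  rw [cpred, dif_pos h]
  obtain ⟨hm0, hmx⟩ := Nat.find_spec h
  refine ⟨?_, ⟨_, rfl⟩⟩
  rw [← Function.iterate_succ_apply' p (Nat.find h - 1) x, Nat.succ_eq_add_one,
    Nat.sub_add_cancel hm0]
  exact hmx

lemma cpred_update (G : SimpleGraph V) (x y : V) (p : V → V) (hadj : G.Adj y x)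
    (hp : IsRootedTree G y p) : cpred (Function.update p y x) x = y := by
  have hxy : x ≠ y := hadj.ne'
  set p' := Function.update p y x with hp'def
  have hex : ∃ n, p^[n] x = y := hp.2.2 x
  set n₀ := Nat.find hex with hn₀
  have hmin : ∀ j < n₀, p^[j] x ≠ y := fun j hj => Nat.find_min hex hj
  have hn₀pos : 0 < n₀ := by
    rcases Nat.eq_zero_or_pos n₀ with h0 | h0
    · exfalso; have := Nat.find_spec hex; rw [← hn₀, h0] at this; exact hxy this
    · exact h0
  have h1 : ∀ j ≤ n₀, p'^[j] x = p^[j] x := fun j hj =>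
    iterate_update_of_ne p y x x j (fun i hi => hmin i (lt_of_lt_of_le hi hj))
  have h2 : p'^[n₀] x = y := by rw [h1 n₀ le_rfl]; exact Nat.find_spec hex
  have h3 : p'^[n₀ + 1] x = x := by
    rw [Function.iterate_succ_apply', h2, hp'def, Function.update_self]
  have hEx : ∃ n, 0 < n ∧ p'^[n] x = x := ⟨n₀ + 1, Nat.succ_pos _, h3⟩
  have hfind : Nat.find hEx = n₀ + 1 := by
    rw [Nat.find_eq_iff]
    refine ⟨⟨Nat.succ_pos _, h3⟩, ?_⟩
    rintro j hj ⟨hj0, hjx⟩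
    have hjle : j ≤ n₀ := Nat.lt_succ_iff.mp hj
    have hpj : p^[j] x = x := by rw [← h1 j hjle]; exact hjx
    have : p^[n₀] x = p^[n₀ % j] x := iterate_mod_of_periodic p x hpj n₀
    have hmod : n₀ % j < j := Nat.mod_lt _ hj0
    exact hmin (n₀ % j) (lt_of_lt_of_le hmod hjle)
      (by rw [← this]; exact Nat.find_spec hex)
  rw [cpred, dif_pos hEx, hfind, Nat.add_sub_cancel, h2]

lemma lhs_eq (G : SimpleGraph V) (k : V → V → ℝ)
    (hk0 : ∀ x y, ¬ G.Adj x y → k x y = 0) (x : V) :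
    ∑ y, k x y * treeSum G k x
      = ∑ p ∈ Finset.univ.filter (fun p : V → V => Funct G x p), wt k p := by
  rw [← Finset.sum_filter_of_ne (p := fun y => G.Adj x y)
    (fun y _ hne => by by_contra hadj; exact hne (by rw [hk0 x y hadj, zero_mul]))]
  simp only [treeSum, Finset.mul_sum]
  rw [← Finset.sum_product' (s := Finset.univ.filter (fun y => G.Adj x y))
    (t := Finset.univ.filter (fun p : V → V => IsRootedTree G x p))
    (f := fun y p => k x y * wt k p)]
  refine Finset.sum_bij' (fun q _ => Function.update q.2 x q.1)
    (fun p _ => (p x, Function.update p x x)) ?_ ?_ ?_ ?_ ?_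
  · rintro ⟨y, p⟩ hq
    rw [Finset.mem_product, Finset.mem_filter, Finset.mem_filter] at hq
    obtain ⟨⟨-, hadj⟩, -, htree⟩ := hq
    rw [Finset.mem_filter]
    dsimp only at *
    refine ⟨Finset.mem_univ _, ?_, ?_⟩
    · intro v
      by_cases hv : v = x
      · subst hv; rw [Function.update_self]; exact hadj
      · rw [Function.update_of_ne hv]; exact htree.2.1 v hv
    · have key : ∀ v, v ≠ x → ∃ n, 0 < n ∧ (Function.update p x y)^[n] v = x := by
        intro v hv
        have hex : ∃ n, p^[n] v = x := htree.2.2 v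
        refine ⟨Nat.find hex, ?_, ?_⟩
        · rcases Nat.eq_zero_or_pos (Nat.find hex) with h0 | h0
          · exfalso
            apply hv
            have := Nat.find_spec hex
            rw [h0] at this
            simpa using this
          · exact h0
        · rw [iterate_update_of_ne p x y v _ (fun j hj => Nat.find_min hex hj)]
          exact Nat.find_spec hex
      intro v
      by_cases hv : v = x
      · subst hv
        obtain ⟨m, -, hm⟩ := key y hadj.ne'
        exact ⟨m + 1, Nat.succ_pos _, by
          rw [Function.iterate_succ_apply, Function.update_self]; exact hm⟩
      · exact key v hv
  · intro p hp
    rw [Finset.mem_filter] at hp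
    obtain ⟨-, hAdj, hReach⟩ := hp
    rw [Finset.mem_product, Finset.mem_filter, Finset.mem_filter]
    dsimp only
    refine ⟨⟨Finset.mem_univ _, hAdj x⟩, Finset.mem_univ _, ?_, ?_, ?_⟩
    · rw [Function.update_self]
    · intro v hv; rw [Function.update_of_ne hv]; exact hAdj v
    · intro v
      obtain ⟨n, -, hn⟩ := hReach v
      have hex : ∃ n, p^[n] v = x := ⟨n, hn⟩
      refine ⟨Nat.find hex, ?_⟩
      rw [iterate_update_of_ne p x x v _ (fun j hj => Nat.find_min hex hj)]
      exact Nat.find_spec hex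
  · rintro ⟨y, p⟩ hq
    rw [Finset.mem_product, Finset.mem_filter, Finset.mem_filter] at hq
    obtain ⟨-, -, htree⟩ := hq
    dsimp only at *
    rw [Function.update_self, Function.update_idem,
      Function.update_eq_self_iff.mpr htree.1.symm]
  · intro p hp
    rw [Finset.mem_filter] at hp
    obtain ⟨-, hAdj, -⟩ := hp
    dsimp only
    rw [Function.update_idem, Function.update_eq_self_iff.mpr rfl]
  · rintro ⟨y, p⟩ hq
    rw [Finset.mem_product, Finset.mem_filter, Finset.mem_filter] at hq
    obtain ⟨⟨-, hadj⟩, -, htree⟩ := hq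
    dsimp only at *
    exact (wt_update G k p x y htree.1 htree.2.1 hadj.ne').symm

lemma rhs_eq (G : SimpleGraph V) (k : V → V → ℝ)
    (hk0 : ∀ x y, ¬ G.Adj x y → k x y = 0) (x : V) :
    ∑ y, k y x * treeSum G k y
      = ∑ p ∈ Finset.univ.filter (fun p : V → V => Funct G x p), wt k p := by
  rw [← Finset.sum_filter_of_ne (p := fun y => G.Adj y x)
    (fun y _ hne => by by_contra hadj; exact hne (by rw [hk0 y x hadj, zero_mul]))]
  simp only [treeSum, Finset.mul_sum]
  rw [Finset.sum_sigma' (Finset.univ.filter (fun y => G.Adj y x))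
    (fun y => Finset.univ.filter (fun p : V → V => IsRootedTree G y p))
    (fun y p => k y x * wt k p)]
  refine Finset.sum_bij' (fun q _ => Function.update q.2 q.1 x)
    (fun p _ => ⟨cpred p x, Function.update p (cpred p x) (cpred p x)⟩) ?_ ?_ ?_ ?_ ?_
  · rintro ⟨y, p⟩ hq
    rw [Finset.mem_sigma, Finset.mem_filter, Finset.mem_filter] at hq
    obtain ⟨⟨-, hadj⟩, -, htree⟩ := hq
    rw [Finset.mem_filter]
    dsimp only at *
    refine ⟨Finset.mem_univ _, ?_, ?_⟩
    · intro v
      by_cases hv : v = y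
      · subst hv; rw [Function.update_self]; exact hadj
      · rw [Function.update_of_ne hv]; exact htree.2.1 v hv
    · intro v
      have hex : ∃ n, p^[n] v = y := htree.2.2 v
      have h1 : (Function.update p y x)^[Nat.find hex] v = y := by
        rw [iterate_update_of_ne p y x v _ (fun j hj => Nat.find_min hex hj)]
        exact Nat.find_spec hex
      exact ⟨Nat.find hex + 1, Nat.succ_pos _, by
        rw [Function.iterate_succ_apply', h1, Function.update_self]⟩
  · intro p hp
    rw [Finset.mem_filter] at hp
    obtain ⟨-, hAdj, hReach⟩ := hp
    have hEx : ∃ n, 0 < n ∧ p^[n] x = x := hReach x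
    obtain ⟨hcy, ⟨m, hmc⟩⟩ := cpred_spec p x hEx
    have hadj : G.Adj (cpred p x) x := by have := hAdj (cpred p x); rwa [hcy] at this
    rw [Finset.mem_sigma, Finset.mem_filter, Finset.mem_filter]
    dsimp only
    refine ⟨⟨Finset.mem_univ _, hadj⟩, Finset.mem_univ _, ?_, ?_, ?_⟩
    · rw [Function.update_self]
    · intro v hv; rw [Function.update_of_ne hv]; exact hAdj v
    · intro v
      obtain ⟨n, -, hn⟩ := hReach v
      have hex : ∃ j, p^[j] v = cpred p x :=
        ⟨m + n, by rw [Function.iterate_add_apply, hn]; exact hmc⟩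
      refine ⟨Nat.find hex, ?_⟩
      rw [iterate_update_of_ne p (cpred p x) (cpred p x) v _
        (fun j hj => Nat.find_min hex hj)]
      exact Nat.find_spec hex
  · rintro ⟨y, p⟩ hq
    rw [Finset.mem_sigma, Finset.mem_filter, Finset.mem_filter] at hq
    obtain ⟨⟨-, hadj⟩, -, htree⟩ := hq
    dsimp only at *
    have hc : cpred (Function.update p y x) x = y := cpred_update G x y p hadj htree
    refine Sigma.ext hc ?_
    dsimp only
    rw [hc, Function.update_idem, Function.update_eq_self_iff.mpr htree.1.symm]
  · intro p hp
    rw [Finset.mem_filter] at hp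
    obtain ⟨-, hAdj, hReach⟩ := hp
    obtain ⟨hcy, -⟩ := cpred_spec p x (hReach x)
    dsimp only
    rw [Function.update_idem, Function.update_eq_self_iff.mpr hcy.symm]
  · rintro ⟨y, p⟩ hq
    rw [Finset.mem_sigma, Finset.mem_filter, Finset.mem_filter] at hq
    obtain ⟨⟨-, hadj⟩, -, htree⟩ := hq
    dsimp only at *
    exact (wt_update G k p y x htree.1 htree.2.1 hadj.ne').symm

/-- Kirchhoff's matrix-tree formula: `ρ(x) = w(x)/W` satisfies the stationary
master equation. -/
theorem stmt1 (G : SimpleGraph V) (hG : G.Connected)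
    (k : V → V → ℝ)
    (hk : ∀ x y, 0 < k x y ↔ G.Adj x y)
    (hk0 : ∀ x y, ¬ G.Adj x y → k x y = 0)
    (ρ : V → ℝ) (hρ : ∀ x, ρ x = treeSum G k x / W G k) :
    ∀ x, ∑ y, k x y * ρ x = ∑ y, k y x * ρ y := by
  intro x
  simp only [hρ]
  have key : ∑ y, k x y * treeSum G k x = ∑ y, k y x * treeSum G k y := by
    rw [lhs_eq G k hk0 x, rhs_eq G k hk0 x]
  calc ∑ y, k x y * (treeSum G k x / W G k)
      = (∑ y, k x y * treeSum G k x) / W G k := by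
        rw [Finset.sum_div]; exact Finset.sum_congr rfl fun y _ => by ring
    _ = (∑ y, k y x * treeSum G k y) / W G k := by rw [key]
    _ = ∑ y, k y x * (treeSum G k y / W G k) := by
        rw [Finset.sum_div]; exact Finset.sum_congr rfl fun y _ => by ring
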